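/- The set {2^n : n ∈ ℕ} ∪ {2^n + 2n : n ∈ ℕ} is not an I₀ set. -/

import Mathlib

/-- A sequence `ψ : ℕ → ℂ` is almost periodic if it is a uniform limit of
trigonometric polynomials. -/
def AlmostPeriodic (ψ : ℕ → ℂ) : Prop :=
  ∀ ε : ℝ, 0 < ε → ∃ (m : ℕ) (c : Fin m → ℂ) (α : Fin m → ℝ),
    ∀ n : ℕ, ‖ψ n - ∑ j, c j * Complex.exp (2 * (Real.pi : ℂ) * Complex.I * (n : ℂ) * (α j : ℂ))‖ < ε

/-- A set `E ⊆ ℕ` is an `I₀` set if every bounded function on `E` extends to an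
almost periodic sequence on `ℕ`. -/
def IsI0Set (E : Set ℕ) : Prop :=
  ∀ b : ℕ → ℂ, (∃ C : ℝ, ∀ n ∈ E, ‖b n‖ ≤ C) →
    ∃ ψ : ℕ → ℂ, AlmostPeriodic ψ ∧ ∀ r ∈ E, ψ r = b r

open Classical in
/-- The candidate bounded function: `0` on powers of two, `1` elsewhere. -/
noncomputable def bFun : ℕ → ℂ := fun m => if ∃ k : ℕ, 0 < k ∧ m = 2 ^ k then 0 else 1

lemma bFun_pow (n : ℕ) (hn : 0 < n) : bFun (2 ^ n) = 0 := by
  unfold bFun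
  rw [if_pos ⟨n, hn, rfl⟩]

lemma two_mul_lt_two_pow (n : ℕ) (hn : 3 ≤ n) : 2 * n < 2 ^ n := by
  induction n with
  | zero => omega
  | succ k ih =>
    rcases Nat.lt_or_ge k 3 with hk | hk
    · interval_cases k <;> simp_all <;> omega
    · have h1 := ih hk
      have h2 : 2 ≤ 2 ^ k := Nat.one_lt_two_pow (by omega)
      have : 2 ^ (k + 1) = 2 ^ k + 2 ^ k := by ring
      omega

lemma bFun_shift (n : ℕ) (hn : 3 ≤ n) : bFun (2 ^ n + 2 * n) = 1 := by
  unfold bFun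
  rw [if_neg]
  rintro ⟨k, hk, he⟩
  have h1 : 2 * n < 2 ^ n := two_mul_lt_two_pow n hn
  have h2 : 2 ^ n < 2 ^ k := by omega
  have h3 : n < k := (Nat.pow_lt_pow_iff_right (by norm_num)).mp h2
  have h4 : 2 ^ (n + 1) ≤ 2 ^ k := Nat.pow_le_pow_right (by norm_num) h3
  have h5 : 2 ^ (n + 1) = 2 ^ n + 2 ^ n := by ring
  omega

/-- An exp of a purely imaginary number has norm 1;
specialized to our argument shape. -/
lemma norm_expi (t : ℕ) (a : ℝ) :
    ‖Complex.exp (2 * (Real.pi : ℂ) * Complex.I * (t : ℂ) * (a : ℂ))‖ = 1 := by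
  have h : 2 * (Real.pi : ℂ) * Complex.I * (t : ℂ) * (a : ℂ)
      = ((2 * Real.pi * t * a : ℝ) : ℂ) * Complex.I := by push_cast; ring
  rw [h, Complex.norm_exp_ofReal_mul_I]

lemma expi_add (s t : ℕ) (a : ℝ) :
    Complex.exp (2 * (Real.pi : ℂ) * Complex.I * ((s + t : ℕ) : ℂ) * (a : ℂ))
      = Complex.exp (2 * (Real.pi : ℂ) * Complex.I * (s : ℂ) * (a : ℂ)) *
        Complex.exp (2 * (Real.pi : ℂ) * Complex.I * (t : ℂ) * (a : ℂ)) := by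
  rw [← Complex.exp_add]
  congr 1
  push_cast
  ring

/-- Simultaneous recurrence: there is `n ≥ 3` such that `e(2·n·αⱼ)` is
`δ`-close to `1` for every `j`. -/
lemma key_recurrence (m : ℕ) (α : Fin m → ℝ) (δ : ℝ) (hδ : 0 < δ) :
    ∃ n : ℕ, 3 ≤ n ∧ ∀ j,
      ‖Complex.exp (2 * (Real.pi : ℂ) * Complex.I * ((2 * n : ℕ) : ℂ) * (α j : ℂ)) - 1‖ < δ := by
  set g : ℕ → (Fin m → ℂ) := fun s j =>
    Complex.exp (2 * (Real.pi : ℂ) * Complex.I * ((6 * s : ℕ) : ℂ) * (α j : ℂ)) with hg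
  have hgb : ∀ s, g s ∈ Metric.closedBall (0 : Fin m → ℂ) 1 := by
    intro s
    rw [Metric.mem_closedBall, dist_zero_right]
    rw [pi_norm_le_iff_of_nonneg (by norm_num)]
    intro j
    exact le_of_eq (norm_expi _ _)
  obtain ⟨a, _, φ, hφ, hconv⟩ := tendsto_subseq_of_bounded Metric.isBounded_closedBall hgb
  rw [Metric.tendsto_atTop] at hconv
  obtain ⟨S, hS⟩ := hconv (δ / 2) (by linarith)
  have h1 : dist (g (φ (S + 1))) (g (φ S)) < δ := by
    have a1 := hS S (le_refl S)
    have a2 := hS (S + 1) (by omega)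
    calc dist (g (φ (S + 1))) (g (φ S))
        ≤ dist ((g ∘ φ) (S + 1)) a + dist ((g ∘ φ) S) a := dist_triangle_right _ _ _
      _ < δ := by simp only [Function.comp] at a1 a2 ⊢; linarith
  have hlt : φ S < φ (S + 1) := hφ (by omega)
  refine ⟨3 * (φ (S + 1) - φ S), by omega, ?_⟩
  intro j
  have hkey : (6 * φ (S + 1) : ℕ) = 6 * φ S + 2 * (3 * (φ (S + 1) - φ S)) := by omega
  have h2 : g (φ (S + 1)) j = g (φ S) j *
      Complex.exp (2 * (Real.pi : ℂ) * Complex.I *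
        ((2 * (3 * (φ (S + 1) - φ S)) : ℕ) : ℂ) * (α j : ℂ)) := by
    simp only [hg]
    rw [← expi_add, ← hkey]
  have h3 : ‖g (φ (S + 1)) j - g (φ S) j‖ < δ :=
    lt_of_le_of_lt (by rw [← dist_eq_norm]; exact dist_le_pi_dist (g (φ (S + 1))) (g (φ S)) j) h1
  calc ‖Complex.exp (2 * (Real.pi : ℂ) * Complex.I *
        ((2 * (3 * (φ (S + 1) - φ S)) : ℕ) : ℂ) * (α j : ℂ)) - 1‖
      = ‖g (φ S) j‖ * ‖Complex.exp (2 * (Real.pi : ℂ) * Complex.I *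
        ((2 * (3 * (φ (S + 1) - φ S)) : ℕ) : ℂ) * (α j : ℂ)) - 1‖ := by
        rw [norm_expi]; ring
    _ = ‖g (φ S) j * (Complex.exp (2 * (Real.pi : ℂ) * Complex.I *
        ((2 * (3 * (φ (S + 1) - φ S)) : ℕ) : ℂ) * (α j : ℂ)) - 1)‖ := (norm_mul _ _).symm
    _ = ‖g (φ (S + 1)) j - g (φ S) j‖ := by rw [mul_sub, mul_one, ← h2]
    _ < δ := h3

/-- The set `{2^n : n ∈ ℕ} ∪ {2^n + 2n : n ∈ ℕ}` is not an `I₀` set. -/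
theorem union_pow_two_not_I0 :
    ¬ IsI0Set ({m : ℕ | ∃ n : ℕ, 0 < n ∧ m = 2 ^ n} ∪
      {m : ℕ | ∃ n : ℕ, 0 < n ∧ m = 2 ^ n + 2 * n}) := by
  intro h
  obtain ⟨ψ, hap, hψ⟩ := h bFun ⟨1, by
    intro n _
    unfold bFun
    split <;> simp⟩
  obtain ⟨m, c, α, hP⟩ := hap (1 / 8) (by norm_num)
  set C : ℝ := ∑ j, ‖c j‖ with hC
  have hC0 : 0 ≤ C := Finset.sum_nonneg fun j _ => norm_nonneg _
  have hδ : (0 : ℝ) < 1 / (4 * (C + 1)) := by positivity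
  obtain ⟨n, hn3, hrec⟩ := key_recurrence m α (1 / (4 * (C + 1))) hδ
  -- values of ψ
  have hx : ψ (2 ^ n) = 0 := by
    rw [hψ (2 ^ n) (Or.inl ⟨n, by omega, rfl⟩), bFun_pow n (by omega)]
  have hy : ψ (2 ^ n + 2 * n) = 1 := by
    rw [hψ (2 ^ n + 2 * n) (Or.inr ⟨n, by omega, rfl⟩), bFun_shift n hn3]
  set P : ℕ → ℂ := fun t =>
    ∑ j, c j * Complex.exp (2 * (Real.pi : ℂ) * Complex.I * (t : ℂ) * (α j : ℂ)) with hPdef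
  have h1 : ‖ψ (2 ^ n) - P (2 ^ n)‖ < 1 / 8 := hP _
  have h2 : ‖ψ (2 ^ n + 2 * n) - P (2 ^ n + 2 * n)‖ < 1 / 8 := hP _
  have hdiff : ‖P (2 ^ n + 2 * n) - P (2 ^ n)‖ < 1 / 4 := by
    have heq : P (2 ^ n + 2 * n) - P (2 ^ n) = ∑ j,
        c j * Complex.exp (2 * (Real.pi : ℂ) * Complex.I * ((2 ^ n : ℕ) : ℂ) * (α j : ℂ)) *
        (Complex.exp (2 * (Real.pi : ℂ) * Complex.I * ((2 * n : ℕ) : ℂ) * (α j : ℂ)) - 1) := by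
      rw [hPdef, ← Finset.sum_sub_distrib]
      apply Finset.sum_congr rfl
      intro j _
      rw [expi_add (2 ^ n) (2 * n) (α j)]
      push_cast
      ring
    rw [heq]
    calc ‖∑ j, c j * Complex.exp (2 * (Real.pi : ℂ) * Complex.I * ((2 ^ n : ℕ) : ℂ) * (α j : ℂ)) *
          (Complex.exp (2 * (Real.pi : ℂ) * Complex.I * ((2 * n : ℕ) : ℂ) * (α j : ℂ)) - 1)‖
        ≤ ∑ j, ‖c j * Complex.exp (2 * (Real.pi : ℂ) * Complex.I *
            ((2 ^ n : ℕ) : ℂ) * (α j : ℂ)) *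
          (Complex.exp (2 * (Real.pi : ℂ) * Complex.I * ((2 * n : ℕ) : ℂ) * (α j : ℂ)) - 1)‖ :=
          norm_sum_le _ _
      _ ≤ ∑ j, ‖c j‖ * (1 / (4 * (C + 1))) := by
          apply Finset.sum_le_sum
          intro j _
          rw [norm_mul, norm_mul, norm_expi, mul_one]
          exact mul_le_mul_of_nonneg_left (le_of_lt (hrec j)) (norm_nonneg _)
      _ = C * (1 / (4 * (C + 1))) := by rw [← Finset.sum_mul]
      _ < 1 / 4 := by
          have hpos : (0 : ℝ) < 4 * (C + 1) := by positivity
          rw [mul_one_div, div_lt_iff₀ hpos]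
          nlinarith
  have hnorm : ‖ψ (2 ^ n + 2 * n) - ψ (2 ^ n)‖ = 1 := by
    rw [hx, hy]; simp
  have hfinal : ‖ψ (2 ^ n + 2 * n) - ψ (2 ^ n)‖ < 1 / 2 := by
    calc ‖ψ (2 ^ n + 2 * n) - ψ (2 ^ n)‖
        ≤ ‖ψ (2 ^ n + 2 * n) - P (2 ^ n + 2 * n)‖ + ‖P (2 ^ n + 2 * n) - P (2 ^ n)‖ +
          ‖P (2 ^ n) - ψ (2 ^ n)‖ := by
          have := norm_sub_le_norm_sub_add_norm_sub (ψ (2 ^ n + 2 * n)) (P (2 ^ n)) (ψ (2 ^ n))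
          have h4 : ψ (2 ^ n + 2 * n) - ψ (2 ^ n)
              = (ψ (2 ^ n + 2 * n) - P (2 ^ n + 2 * n)) + (P (2 ^ n + 2 * n) - P (2 ^ n)) +
                (P (2 ^ n) - ψ (2 ^ n)) := by ring
          rw [h4]
          exact le_trans (norm_add_le _ _) (by gcongr; exact norm_add_le _ _)
      _ < 1 / 8 + 1 / 4 + 1 / 8 := by
          have h3 : ‖P (2 ^ n) - ψ (2 ^ n)‖ < 1 / 8 := by rwa [norm_sub_rev]
          linarith
      _ = 1 / 2 := by norm_num
  rw [hnorm] at hfinal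
  linarith
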